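/- arXiv:2003.14271 — 6 statements merged into one kernel-verified Lean document; each statement's English description precedes it below -/
import Mathlib

section
/- If two transactions tx and tx' are apart, then for any sequence of transactions B, the sequences B;tx;tx' and B;tx';tx are observationally equivalent, i.e., they have the same set of unspent outputs. -/
/-- Idealised EUTxO: positions, redeemers, datums are naturals; values are
multisets of chips (pairs of naturals), modelled as functions to ℕ. -/
abbrev Position := ℕ
abbrev Redeemer := ℕ
abbrev Datum := ℕ
abbrev Value := ℕ × ℕ → ℕ

/-- An input is a pair of a position and a redeemer. -/
structure Input where
  pos : Position
  redeemer : Redeemer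

/-- An output is a tuple (position, validator, datum, value).  Since validators
are sets of tuples mentioning contexts (which mention outputs), we break the
type-level recursion by abstracting the type `V` of validators together with a
validation relation `val : V → Redeemer → Datum → Value → Context V → Prop`. -/
structure Output (V : Type) where
  pos : Position
  validator : V
  datum : Datum
  value : Value

/-- A transaction is a (finite) set of inputs and a (finite) set of outputs. -/
structure Tx (V : Type) where
  inputs : List Input
  outputs : List (Output V)

/-- A context is a transaction pointed at one of its inputs. -/
structure Context (V : Type) where
  tx : Tx V
  point : Input

variable {V : Type}

/-- All outputs appearing in a sequence of transactions. -/
def outputsOf (B : List (Tx V)) : List (Output V) := B.flatMap Tx.outputs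

/-- A sequence of transactions is a valid blockchain when:
(1) distinct outputs appearing in it have distinct positions;
(2) every input points to (has the position of) a unique output in a strictly
    earlier transaction;
(3) each pointing input satisfies the validator of the output it points to. -/
def Valid (val : V → Redeemer → Datum → Value → Context V → Prop)
    (B : List (Tx V)) : Prop :=
  (outputsOf B).Pairwise (fun o o' => o.pos ≠ o'.pos) ∧
  (∀ n (hn : n < B.length), ∀ i ∈ B[n].inputs,
    ∃! o : Output V, o ∈ outputsOf (B.take n) ∧ o.pos = i.pos) ∧
  (∀ n (hn : n < B.length), ∀ i ∈ B[n].inputs, ∀ o ∈ outputsOf (B.take n),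
    o.pos = i.pos →
    val o.validator i.redeemer o.datum o.value ⟨B[n], i⟩)

/-- The unspent outputs of a sequence of transactions: outputs to which no
input of a strictly later transaction points. -/
def UTxO (B : List (Tx V)) : Set (Output V) :=
  { o | ∃ m, ∃ hm : m < B.length, o ∈ B[m].outputs ∧
        ∀ n, ∀ hn : n < B.length, m < n → ∀ i ∈ B[n].inputs, i.pos ≠ o.pos }

/-- A transaction mentions a position when it occurs in one of its inputs or
outputs. -/
def Mentions (tx : Tx V) (p : Position) : Prop :=
  (∃ i ∈ tx.inputs, i.pos = p) ∨ (∃ o ∈ tx.outputs, o.pos = p)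

/-- Two transactions are apart when they mention disjoint sets of positions. -/
def Apart (tx tx' : Tx V) : Prop := ∀ p, Mentions tx p → ¬ Mentions tx' p


lemma getElem_pair_idx {α} (B : List α) (a b : α)
    (h : B.length < (B ++ [a, b]).length) :
    (B ++ [a, b])[B.length] = a := by
  rw [List.getElem_append_right (le_refl _)]
  simp

lemma getElem_pair_idx' {α} (B : List α) (a b : α)
    (h : B.length + 1 < (B ++ [a, b]).length) :
    (B ++ [a, b])[B.length + 1] = b := by
  rw [List.getElem_append_right (by omega)]
  simp

lemma utxo_subset_of_apart (B : List (Tx V)) (tx tx' : Tx V) (h : Apart tx tx') :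
    UTxO (B ++ [tx, tx']) ⊆ UTxO (B ++ [tx', tx]) := by
  intro o ⟨m, hm, ho, hsp⟩
  set L := B.length with hL
  have hlen : (B ++ [tx, tx']).length = L + 2 := by simp [hL]
  have hlen' : (B ++ [tx', tx']).length = L + 2 := by simp [hL]
  have hm2 : m < L + 2 := by omega
  -- helper for old chain getElems
  by_cases hml : m < L
  · refine ⟨m, by simp; omega, ?_, ?_⟩
    · rwa [List.getElem_append_left hml] at ho ⊢
    · intro n hn hmn i hi
      have hn2 : n < L + 2 := by simpa using hn
      by_cases hnl : n < L
      · have := hsp n (by omega) hmn i ?_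
        · exact this
        · rwa [List.getElem_append_left hnl] at hi ⊢
      · rcases (by omega : n = L ∨ n = L + 1) with rfl | rfl
        · -- input of tx' ; old chain index L+1
          rw [getElem_pair_idx B tx' tx (by omega)] at hi
          have := hsp (L + 1) (by omega) (by omega) i ?_
          · exact this
          · rwa [getElem_pair_idx' B tx tx' (by omega)]
        · -- input of tx ; old chain index L
          rw [getElem_pair_idx' B tx' tx (by omega)] at hi
          have := hsp L (by omega) (by omega) i ?_
          · exact this
          · rwa [getElem_pair_idx B tx tx' (by omega)]
  · rcases (by omega : m = L ∨ m = L + 1) with rfl | rfl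
    · -- o ∈ tx.outputs ; place at L+1 in new chain
      have ho' : o ∈ tx.outputs := by
        rwa [getElem_pair_idx B tx tx' hm] at ho
      refine ⟨L + 1, by simp [hL], ?_, ?_⟩
      · rwa [getElem_pair_idx' B tx' tx (by simp)]
      · intro n hn hmn i hi
        have : n < L + 2 := by simpa using hn
        omega
    · -- o ∈ tx'.outputs ; place at L in new chain
      have ho' : o ∈ tx'.outputs := by
        rwa [getElem_pair_idx' B tx tx' hm] at ho
      refine ⟨L, by simp [hL], ?_, ?_⟩
      · rwa [getElem_pair_idx B tx' tx (by simp)]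
      · intro n hn hmn i hi
        have hn2 : n < L + 2 := by simpa using hn
        have hnL : n = L + 1 := by omega
        subst hnL
        have hi' : i ∈ tx.inputs := by
          rwa [getElem_pair_idx' B tx' tx (by simp)] at hi
        intro hpos
        exact h o.pos (Or.inl ⟨i, hi', hpos⟩) (Or.inr ⟨o, ho', rfl⟩)

/-- Apart transactions commute up to observational equivalence. -/
theorem utxo_swap_of_apart (B : List (Tx V)) (tx tx' : Tx V) (h : Apart tx tx') :
    UTxO (B ++ [tx, tx']) = UTxO (B ++ [tx', tx]) := by
  have h' : Apart tx' tx := fun p hp hq => h p hq hp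
  exact Set.Subset.antisymm (utxo_subset_of_apart B tx tx' h)
    (utxo_subset_of_apart B tx' tx h')
end

section
/- (Stateless UTxO theorem, validity part) If B;txs;tx is a valid blockchain and B;tx is a valid blockchain, then B;tx;txs is a valid blockchain. -/
variable {V : Type}

/-- Stateless UTxO theorem, validity part: if `B;txs;tx` and `B;tx` are valid
blockchains then so is `B;tx;txs`. -/
theorem valid_commute (val : V → Redeemer → Datum → Value → Context V → Prop)
    (B txs : List (Tx V)) (tx : Tx V)
    (h1 : Valid val (B ++ txs ++ [tx])) (h2 : Valid val (B ++ [tx])) :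
    Valid val (B ++ [tx] ++ txs) := by
  obtain ⟨h1p, h1e, h1v⟩ := h1
  obtain ⟨h2p, h2e, h2v⟩ := h2
  have hout : ∀ (A C : List (Tx V)), outputsOf (A ++ C) = outputsOf A ++ outputsOf C := by
    intro A C; simp [outputsOf]
  -- permutation of all outputs
  have hperm : (outputsOf (B ++ txs ++ [tx])).Perm (outputsOf (B ++ [tx] ++ txs)) := by
    rw [hout, hout, hout, hout]
    simp only [List.append_assoc]
    exact List.Perm.append_left _ List.perm_append_comm
  -- freshness: outputs of tx have positions distinct from earlier outputs
  have hfresh : ∀ o ∈ outputsOf (B ++ txs), ∀ o' ∈ tx.outputs, o.pos ≠ o'.pos := by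
    rw [hout] at h1p
    have h := (List.pairwise_append.mp h1p).2.2
    intro o ho o' ho'
    exact h o ho o' (by simpa [outputsOf] using ho')
  -- membership monotonicity for take
  have hmono : ∀ (k : ℕ) (o : Output V), o ∈ outputsOf (B ++ txs.take k) →
      o ∈ outputsOf (B ++ txs) := by
    intro k o ho
    simp only [outputsOf, List.mem_flatMap, List.mem_append] at ho ⊢
    obtain ⟨t', ht', ho⟩ := ho
    refine ⟨t', ?_, ho⟩
    rcases ht' with h | h
    · exact Or.inl h
    · exact Or.inr (List.mem_of_mem_take h)
  -- take lemmas
  have htake0 : ∀ n ≤ B.length, (B ++ txs ++ [tx]).take n = B.take n := by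
    intro n hn
    rw [List.take_append, List.take_append]
    have : n - B.length = 0 := by omega
    have h2 : n - (B.length + txs.length) = 0 := by omega
    simp [this, h2]
  have htake0' : ∀ n ≤ B.length, (B ++ [tx] ++ txs).take n = B.take n := by
    intro n hn
    rw [List.take_append, List.take_append]
    have : n - B.length = 0 := by omega
    have h2 : n - (B.length + 1) = 0 := by omega
    simp [this, h2]
  have htakeb2 : (B ++ [tx]).take B.length = B := by
    rw [List.take_append]
    simp
  have htake1 : ∀ k ≤ txs.length, (B ++ txs ++ [tx]).take (B.length + k) = B ++ txs.take k := by
    intro k hk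
    rw [List.take_append, List.take_append]
    have h2 : B.length + k - (B.length + txs.length) = 0 := by omega
    simp [h2, List.take_of_length_le (show B.length ≤ B.length + k by omega)]
  have htake2 : ∀ k ≤ txs.length,
      (B ++ [tx] ++ txs).take (B.length + 1 + k) = (B ++ [tx]) ++ txs.take k := by
    intro k hk
    rw [List.take_append]
    have : (B ++ [tx]).length ≤ B.length + 1 + k := by simp <;> omega
    rw [List.take_of_length_le this]
    congr 1
    simp
  -- getElem lemmas
  have hlen1 : (B ++ txs ++ [tx]).length = B.length + txs.length + 1 := by simp <;> omega
  have hlen2 : (B ++ [tx] ++ txs).length = B.length + 1 + txs.length := by simp <;> omega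
  have hget1 : ∀ (k : ℕ) (hk : k < txs.length),
      (B ++ txs ++ [tx])[B.length + k]'(by omega) = txs[k] := by
    intro k hk
    rw [List.getElem_append_left (by simp <;> omega), List.getElem_append_right (by omega)]
    congr 1; omega
  have hget2 : ∀ (k : ℕ) (hk : k < txs.length),
      (B ++ [tx] ++ txs)[B.length + 1 + k]'(by omega) = txs[k] := by
    intro k hk
    rw [List.getElem_append_right (by simp <;> omega)]
    congr 1 <;> simp <;> omega
  have hgetn2 : ∀ (n : ℕ) (hn : n < B.length),
      (B ++ [tx] ++ txs)[n]'(by omega) = B[n] := by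
    intro n hn
    rw [List.getElem_append_left (by simp <;> omega), List.getElem_append_left hn]
  have hgetn1 : ∀ (n : ℕ) (hn : n < B.length),
      (B ++ txs ++ [tx])[n]'(by omega) = B[n] := by
    intro n hn
    rw [List.getElem_append_left (by simp <;> omega), List.getElem_append_left hn]
  have hgetb2 : (B ++ [tx] ++ txs)[B.length]'(by omega) = tx := by
    rw [List.getElem_append_left (by simp), List.getElem_append_right (by omega)]
    simp
  have hgetb : (B ++ [tx])[B.length]'(by simp) = tx := by
    rw [List.getElem_append_right (by omega)]
    simp
  -- rewrite of the new take at index b+1+k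
  have houtnew : ∀ k ≤ txs.length, ∀ o : Output V,
      o ∈ outputsOf ((B ++ [tx] ++ txs).take (B.length + 1 + k)) ↔
        (o ∈ outputsOf (B ++ txs.take k) ∨ o ∈ tx.outputs) := by
    intro k hk o
    rw [htake2 k hk, hout, hout, hout]
    simp [outputsOf, or_assoc, or_comm (a := o ∈ tx.outputs)] <;> tauto
  refine ⟨?_, ?_, ?_⟩
  · exact (List.Perm.pairwise_iff (fun h => Ne.symm h) hperm).mp h1p
  · intro n hn i hi
    rw [hlen2] at hn
    rcases lt_trichotomy n B.length with hlt | heq | hgt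
    · rw [hgetn2 n hlt] at hi
      have := h1e n (by omega) i (by rw [hgetn1 n hlt]; exact hi)
      rw [htake0 n (le_of_lt hlt)] at this
      rw [htake0' n (le_of_lt hlt)]
      exact this
    · subst heq
      rw [hgetb2] at hi
      have := h2e B.length (by simp) i (by rw [hgetb]; exact hi)
      rw [htakeb2] at this
      rw [htake0' B.length le_rfl, List.take_length]
      exact this
    · obtain ⟨k, hk, rfl⟩ : ∃ k, k < txs.length ∧ n = B.length + 1 + k :=
        ⟨n - (B.length + 1), by omega, by omega⟩
      rw [hget2 k hk] at hi
      have hold := h1e (B.length + k) (by omega) i (by rw [hget1 k hk]; exact hi)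
      rw [htake1 k (le_of_lt hk)] at hold
      obtain ⟨o, ⟨hoM, hoP⟩, houniq⟩ := hold
      refine ⟨o, ⟨(houtnew k (le_of_lt hk) o).mpr (Or.inl hoM), hoP⟩, ?_⟩
      rintro o' ⟨ho'M, ho'P⟩
      rcases (houtnew k (le_of_lt hk) o').mp ho'M with h | h
      · exact houniq o' ⟨h, ho'P⟩
      · exact absurd (ho'P.trans hoP.symm).symm
          (hfresh o (hmono k o hoM) o' h)
  · intro n hn i hi o ho hop
    rw [hlen2] at hn
    rcases lt_trichotomy n B.length with hlt | heq | hgt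
    · rw [hgetn2 n hlt] at hi
      rw [htake0' n (le_of_lt hlt)] at ho
      have := h1v n (by omega) i (by rw [hgetn1 n hlt]; exact hi) o
        (by rw [htake0 n (le_of_lt hlt)]; exact ho) hop
      rw [hgetn1 n hlt] at this
      rw [hgetn2 n hlt]
      exact this
    · subst heq
      rw [hgetb2] at hi ⊢
      rw [htake0' B.length le_rfl, List.take_length] at ho
      have := h2v B.length (by simp) i (by rw [hgetb]; exact hi) o
        (by rw [htakeb2]; exact ho) hop
      rw [hgetb] at this
      exact this
    · obtain ⟨k, hk, rfl⟩ : ∃ k, k < txs.length ∧ n = B.length + 1 + k :=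
        ⟨n - (B.length + 1), by omega, by omega⟩
      rw [hget2 k hk] at hi ⊢
      rcases (houtnew k (le_of_lt hk) o).mp ho with h | h
      · have := h1v (B.length + k) (by omega) i (by rw [hget1 k hk]; exact hi) o
          (by rw [htake1 k (le_of_lt hk)]; exact h) hop
        rw [hget1 k hk] at this
        exact this
      · -- o is an output of tx: contradiction with uniqueness/freshness
        exfalso
        have hold := h1e (B.length + k) (by omega) i (by rw [hget1 k hk]; exact hi)
        rw [htake1 k (le_of_lt hk)] at hold
        obtain ⟨o₀, ⟨ho₀M, ho₀P⟩, _⟩ := hold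
        exact hfresh o₀ (hmono k o₀ ho₀M) o h (ho₀P.trans hop.symm)
end

section
/- (Stateless UTxO theorem, equivalence part) If B;txs;tx is a valid blockchain and B;tx is a valid blockchain, then B;tx;txs and B;txs;tx are observationally equivalent (have the same set of unspent outputs). -/
variable {V : Type}

namespace UtxoAux

variable {V : Type}

lemma outputsOf_split (L : List (Tx V)) (n : ℕ) :
    outputsOf L = outputsOf (L.take n) ++ outputsOf (L.drop n) := by
  rw [outputsOf, outputsOf, outputsOf, ← List.flatMap_append, List.take_append_drop]

lemma getElem_idx_congr {α : Type*} {l : List α} {i j : ℕ} (h : i = j) (hi : i < l.length) :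
    l[i]'hi = l[j]'(h ▸ hi) := by subst h; rfl

lemma mem_drop_outputs {L : List (Tx V)} {n m : ℕ} (hnm : n ≤ m) (hm : m < L.length)
    {o : Output V} (ho : o ∈ L[m].outputs) : o ∈ outputsOf (L.drop n) := by
  refine List.mem_flatMap.2 ⟨L[m], ?_, ho⟩
  have h1 : m - n < (L.drop n).length := by
    rw [List.length_drop]; omega
  have h2 : (L.drop n)[m - n]'h1 = L[m] := by
    rw [List.getElem_drop]
    exact getElem_idx_congr (by omega) _
  rw [← h2]
  exact List.getElem_mem h1

lemma pos_ne_of_split {L : List (Tx V)}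
    (hp : (outputsOf L).Pairwise (fun o o' => o.pos ≠ o'.pos)) (n : ℕ) {o o' : Output V}
    (h1 : o ∈ outputsOf (L.take n)) (h2 : o' ∈ outputsOf (L.drop n)) : o.pos ≠ o'.pos := by
  rw [outputsOf_split L n] at hp
  exact (List.pairwise_append.1 hp).2.2 o h1 o' h2

lemma points_earlier {val : V → Redeemer → Datum → Value → Context V → Prop}
    {L : List (Tx V)} (hL : Valid val L) {n : ℕ} (hn : n < L.length) {i : Input}
    (hi : i ∈ L[n].inputs) {o : Output V} (ho : o ∈ outputsOf L) (hpos : i.pos = o.pos) :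
    o ∈ outputsOf (L.take n) := by
  obtain ⟨o', ⟨ho', hpos'⟩, -⟩ := hL.2.1 n hn i hi
  by_contra h
  have hod : o ∈ outputsOf (L.drop n) := by
    rw [outputsOf_split L n] at ho
    rcases List.mem_append.1 ho with h' | h'
    · exact absurd h' h
    · exact h'
  exact pos_ne_of_split hL.1 n ho' hod (hpos'.trans hpos)

lemma mem_utxo_of {L : List (Tx V)} {o : Output V} (ho : o ∈ outputsOf L)
    (h : ∀ n (_ : n < L.length), ∀ i ∈ L[n].inputs, i.pos ≠ o.pos) : o ∈ UTxO L := by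
  obtain ⟨t', ht', hot⟩ := List.mem_flatMap.1 ho
  obtain ⟨m, hm, heq⟩ := List.mem_iff_getElem.1 ht'
  exact ⟨m, hm, by rw [heq]; exact hot, fun n hn _ i hi => h n hn i hi⟩

lemma utxo_char {val : V → Redeemer → Datum → Value → Context V → Prop}
    {L : List (Tx V)} (hL : Valid val L) {o : Output V} :
    o ∈ UTxO L ↔ o ∈ outputsOf L ∧
      ∀ n (_ : n < L.length), ∀ i ∈ L[n].inputs, i.pos ≠ o.pos := by
  constructor
  · rintro ⟨m, hm, ho, hun⟩
    have homem : o ∈ outputsOf L := List.mem_flatMap.2 ⟨L[m], List.getElem_mem hm, ho⟩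
    refine ⟨homem, ?_⟩
    intro n hn i hi hpos
    rcases lt_or_ge m n with h | h
    · exact hun n hn h i hi hpos
    · exact pos_ne_of_split hL.1 n (points_earlier hL hn hi homem hpos)
        (mem_drop_outputs h hm ho) rfl
  · rintro ⟨ho, h⟩
    exact mem_utxo_of ho h

end UtxoAux

open UtxoAux in
/-- Stateless UTxO theorem, equivalence part: if `B;txs;tx` and `B;tx` are
valid blockchains then `B;tx;txs` and `B;txs;tx` are observationally
equivalent. -/
theorem utxo_commute (val : V → Redeemer → Datum → Value → Context V → Prop)
    (B txs : List (Tx V)) (tx : Tx V)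
    (h1 : Valid val (B ++ txs ++ [tx])) (h2 : Valid val (B ++ [tx])) :
    UTxO (B ++ [tx] ++ txs) = UTxO (B ++ txs ++ [tx]) := by
  have hlen1 : (B ++ [tx] ++ txs).length = B.length + 1 + txs.length := by
    simp; omega
  have hlen2 : (B ++ txs ++ [tx]).length = B.length + txs.length + 1 := by
    simp; omega
  have hperm : (B ++ [tx] ++ txs).Perm (B ++ txs ++ [tx]) := by
    rw [List.append_assoc, List.append_assoc]
    exact List.Perm.append_left B List.perm_append_comm
  have hoperm : (outputsOf (B ++ [tx] ++ txs)).Perm (outputsOf (B ++ txs ++ [tx])) :=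
    hperm.flatMap_right Tx.outputs
  have hpair1 : (outputsOf (B ++ [tx] ++ txs)).Pairwise (fun o o' => o.pos ≠ o'.pos) :=
    (hoperm.pairwise_iff (fun h e => h e.symm)).2 h1.1
  ext o
  constructor
  · rintro ⟨m, hm, ho, hun⟩
    have ho1 : o ∈ outputsOf (B ++ [tx] ++ txs) :=
      List.mem_flatMap.2 ⟨_, List.getElem_mem hm, ho⟩
    have ho2 : o ∈ outputsOf (B ++ txs ++ [tx]) := hoperm.mem_iff.1 ho1
    refine (utxo_char h1).2 ⟨ho2, ?_⟩
    intro n hn i hi hpos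
    have hmem : (B ++ txs ++ [tx])[n] ∈ B ++ [tx] ++ txs :=
      hperm.mem_iff.2 (List.getElem_mem hn)
    obtain ⟨n1, hn1, heq⟩ := List.mem_iff_getElem.1 hmem
    have hi1 : i ∈ (B ++ [tx] ++ txs)[n1].inputs := by rw [heq]; exact hi
    rcases lt_or_ge m n1 with hc | hc
    · exact hun n1 hn1 hc i hi1 hpos
    have hn1' : n1 < B.length + 1 + txs.length := hlen1 ▸ hn1
    have hm' : m < B.length + 1 + txs.length := hlen1 ▸ hm
    have hdrop : o ∈ outputsOf ((B ++ [tx] ++ txs).drop n1) := mem_drop_outputs hc hm ho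
    rcases Nat.lt_trichotomy n1 B.length with h | h | h
    · -- input lives in B
      have hn2 : n1 < (B ++ txs ++ [tx]).length := by rw [hlen2]; omega
      have e1 : (B ++ [tx] ++ txs)[n1] = B[n1] := by
        rw [List.getElem_append_left (by simp; omega), List.getElem_append_left h]
      have e2 : (B ++ txs ++ [tx])[n1]'hn2 = B[n1] := by
        rw [List.getElem_append_left (by simp; omega), List.getElem_append_left h]
      have hi2 : i ∈ ((B ++ txs ++ [tx])[n1]'hn2).inputs := by
        rw [e2, ← e1]; exact hi1
      have htake2 := points_earlier h1 hn2 hi2 ho2 hpos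
      have et2 : (B ++ txs ++ [tx]).take n1 = B.take n1 := by
        rw [List.take_append_of_le_length (by simp; omega),
            List.take_append_of_le_length h.le]
      have et1 : (B ++ [tx] ++ txs).take n1 = B.take n1 := by
        rw [List.take_append_of_le_length (by simp; omega),
            List.take_append_of_le_length h.le]
      rw [et2, ← et1] at htake2
      exact pos_ne_of_split hpair1 n1 htake2 hdrop rfl
    · -- input lives in tx
      have hz : n1 - B.length = 0 := by omega
      have e1 : (B ++ [tx] ++ txs)[n1] = tx := by
        rw [List.getElem_append_left (show n1 < (B ++ [tx]).length by simp; omega),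
            List.getElem_append_right (by omega : B.length ≤ n1)]
        simp [hz]
      have hitx : i ∈ tx.inputs := by rw [e1] at hi1; exact hi1
      have hb : n1 < (B ++ [tx]).length := by simp; omega
      have hitx' : i ∈ ((B ++ [tx])[n1]'hb).inputs := by
        rw [List.getElem_append_right (by omega : B.length ≤ n1)]
        simpa [hz] using hitx
      obtain ⟨o'', ⟨ho'', hpos''⟩, -⟩ := h2.2.1 n1 hb i hitx'
      have hoB : o'' ∈ outputsOf B := by
        rwa [List.take_append_of_le_length (by omega), h, List.take_length] at ho''
      have htk : o'' ∈ outputsOf ((B ++ txs ++ [tx]).take n1) := by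
        rwa [List.take_append_of_le_length (by simp; omega),
             List.take_append_of_le_length (by omega), h, List.take_length]
      have hd : o ∈ outputsOf ((B ++ txs ++ [tx]).drop n1) := by
        rw [List.drop_append_of_le_length (by simp; omega),
            List.drop_append_of_le_length (by omega), h, List.drop_length,
            List.nil_append]
        rcases eq_or_lt_of_le hc with hme | hme
        · refine List.mem_flatMap.2 ⟨tx, by simp, ?_⟩
          rw [← e1]
          have : (B ++ [tx] ++ txs)[n1] = (B ++ [tx] ++ txs)[m] :=
            getElem_idx_congr (by omega) _
          rw [this]; exact ho
        · have em : (B ++ [tx] ++ txs)[m] = txs[m - n1 - 1]'(by omega) := by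
            rw [List.getElem_append_right (by simp; omega)]
            exact getElem_idx_congr (by simp; omega) _
          refine List.mem_flatMap.2 ⟨txs[m - n1 - 1]'(by omega), ?_, ?_⟩
          · exact List.mem_append_left _ (List.getElem_mem _)
          · rw [← em]; exact ho
      exact pos_ne_of_split h1.1 n1 htk hd (hpos''.trans hpos)
    · -- input lives in txs
      have hn2 : n1 - 1 < (B ++ txs ++ [tx]).length := by rw [hlen2]; omega
      have e1 : (B ++ [tx] ++ txs)[n1] = txs[n1 - B.length - 1]'(by omega) := by
        rw [List.getElem_append_right (by simp; omega)]
        exact getElem_idx_congr (by simp; omega) _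
      have e2 : (B ++ txs ++ [tx])[n1 - 1]'hn2 = txs[n1 - B.length - 1]'(by omega) := by
        rw [List.getElem_append_left (by simp; omega),
            List.getElem_append_right (by omega : B.length ≤ n1 - 1)]
        exact getElem_idx_congr (by omega) _
      have hi2 : i ∈ ((B ++ txs ++ [tx])[n1 - 1]'hn2).inputs := by
        rw [e2, ← e1]; exact hi1
      have htake2 := points_earlier h1 hn2 hi2 ho2 hpos
      have et2 : (B ++ txs ++ [tx]).take (n1 - 1) = B ++ txs.take (n1 - 1 - B.length) := by
        rw [List.take_append_of_le_length (by simp; omega),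
            List.take_append, List.take_of_length_le (by omega)]
      have et1 : (B ++ [tx] ++ txs).take n1
          = (B ++ [tx]) ++ txs.take (n1 - 1 - B.length) := by
        rw [List.take_append, List.take_of_length_le (by simp; omega)]
        congr 2
        simp; omega
      have htake1 : o ∈ outputsOf ((B ++ [tx] ++ txs).take n1) := by
        rw [et2] at htake2
        rw [et1]
        rw [outputsOf, List.flatMap_append, List.mem_append] at htake2 ⊢
        rcases htake2 with h' | h'
        · exact Or.inl (by rw [List.flatMap_append]; exact List.mem_append_left _ h')
        · exact Or.inr h'
      exact pos_ne_of_split hpair1 n1 htake1 hdrop rfl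
  · intro hmem
    obtain ⟨ho2, hno⟩ := (utxo_char h1).1 hmem
    refine mem_utxo_of (hoperm.mem_iff.2 ho2) ?_
    intro n hn i hi
    have htxm : (B ++ [tx] ++ txs)[n] ∈ B ++ txs ++ [tx] :=
      hperm.mem_iff.1 (List.getElem_mem hn)
    obtain ⟨n', hn', heq⟩ := List.mem_iff_getElem.1 htxm
    exact hno n' hn' i (by rw [heq]; exact hi)
end

section
/- If B and B' are observationally equivalent sequences of transactions, B;tx is a valid blockchain, and B';tx is a valid blockchain, then B;tx and B';tx are observationally equivalent. -/
variable {V : Type}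

/-- Observational equivalence is preserved by appending a transaction that
validly extends both blockchains. -/
theorem obsEq_append (val : V → Redeemer → Datum → Value → Context V → Prop)
    (B B' : List (Tx V)) (tx : Tx V)
    (he : UTxO B = UTxO B')
    (h : Valid val (B ++ [tx])) (h' : Valid val (B' ++ [tx])) :
    UTxO (B ++ [tx]) = UTxO (B' ++ [tx]) := by
  have key : ∀ (C : List (Tx V)), UTxO (C ++ [tx]) =
      {o | o ∈ UTxO C ∧ ∀ i ∈ tx.inputs, i.pos ≠ o.pos} ∪ {o | o ∈ tx.outputs} := by
    intro C
    ext o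
    constructor
    · rintro ⟨m, hm, ho, hspend⟩
      have hm' : m ≤ C.length := by
        simp only [List.length_append, List.length_singleton] at hm; omega
      rcases lt_or_eq_of_le hm' with hlt | heq
      · left
        refine ⟨⟨m, hlt, ?_, ?_⟩, ?_⟩
        · rwa [List.getElem_append_left hlt] at ho
        · intro n hn hmn i hi
          have hn' : n < (C ++ [tx]).length := by simp; omega
          have := hspend n hn' hmn
          rw [List.getElem_append_left hn] at this
          exact this i hi
        · intro i hi
          have hn' : C.length < (C ++ [tx]).length := by simp
          have := hspend C.length hn' (by omega)
          rw [List.getElem_concat_length (l := C) (a := tx) rfl] at this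
          exact this i hi
      · right
        subst heq
        rwa [List.getElem_concat_length (l := C) (a := tx) rfl] at ho
    · rintro (⟨⟨m, hm, ho, hsp⟩, htx⟩ | ho)
      · refine ⟨m, by simp; omega, ?_, ?_⟩
        · rwa [List.getElem_append_left hm]
        · intro n hn hmn i hi
          have hn' : n ≤ C.length := by
            simp only [List.length_append, List.length_singleton] at hn; omega
          rcases lt_or_eq_of_le hn' with hlt | heq
          · rw [List.getElem_append_left hlt] at hi
            exact hsp n hlt hmn i hi
          · subst heq
            rw [List.getElem_concat_length (l := C) (a := tx) rfl] at hi
            exact htx i hi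
      · refine ⟨C.length, by simp, ?_, ?_⟩
        · rwa [List.getElem_concat_length (l := C) (a := tx) rfl]
        · intro n hn hmn i hi
          simp only [List.length_append, List.length_singleton] at hn; omega
  rw [key B, key B', he]
end

section
/- If tx is apart from every transaction in the sequence txs, then for any sequence B, B;tx;txs is a valid blockchain if and only if B;txs;tx is a valid blockchain, and in that case the two sequences are observationally equivalent. -/
variable {V : Type}

-- AUX START
lemma outputsOf_append (A C : List (Tx V)) :
    outputsOf (A ++ C) = outputsOf A ++ outputsOf C := by
  simp [outputsOf]

lemma outputsOf_cons (t : Tx V) (l : List (Tx V)) :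
    outputsOf (t :: l) = t.outputs ++ outputsOf l := by
  simp [outputsOf]

lemma mem_middle_iff {p : Position} {o : Output V} {l₁ l₂ l₃ : List (Output V)}
    (h : ∀ o' ∈ l₂, o'.pos ≠ p) :
    (o ∈ l₁ ++ (l₂ ++ l₃) ∧ o.pos = p) ↔ (o ∈ l₁ ++ l₃ ∧ o.pos = p) := by
  constructor
  · rintro ⟨hm, rfl⟩
    refine ⟨?_, rfl⟩
    rcases List.mem_append.1 hm with h1 | h1
    · exact List.mem_append.2 (Or.inl h1)
    · rcases List.mem_append.1 h1 with h2 | h2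
      · exact absurd rfl (h o h2)
      · exact List.mem_append.2 (Or.inr h2)
  · rintro ⟨hm, rfl⟩
    refine ⟨?_, rfl⟩
    rcases List.mem_append.1 hm with h1 | h1
    · exact List.mem_append.2 (Or.inl h1)
    · exact List.mem_append.2 (Or.inr (List.mem_append.2 (Or.inr h1)))

lemma mem_pair_iff {p : Position} {o : Output V} {l₁ l₂ : List (Output V)}
    (h : ∀ o' ∈ l₂, o'.pos ≠ p) :
    (o ∈ l₁ ++ l₂ ∧ o.pos = p) ↔ (o ∈ l₁ ∧ o.pos = p) := by
  constructor
  · rintro ⟨hm, rfl⟩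
    refine ⟨?_, rfl⟩
    rcases List.mem_append.1 hm with h1 | h1
    · exact h1
    · exact absurd rfl (h o h1)
  · rintro ⟨hm, rfl⟩
    exact ⟨List.mem_append.2 (Or.inl hm), rfl⟩

lemma utxo_char (val : V → Redeemer → Datum → Value → Context V → Prop)
    (L : List (Tx V)) (hv : Valid val L) :
    UTxO L = { o | o ∈ outputsOf L ∧
      ∀ t ∈ L, ∀ i ∈ t.inputs, i.pos ≠ o.pos } := by
  obtain ⟨h1, h2, h3⟩ := hv
  ext o
  simp only [UTxO, Set.mem_setOf_eq]
  constructor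
  · rintro ⟨m, hm, ho, hlater⟩
    refine ⟨List.mem_flatMap.2 ⟨L[m], List.getElem_mem hm, ho⟩, ?_⟩
    intro t ht i hi
    obtain ⟨n, hn, rfl⟩ := List.mem_iff_getElem.1 ht
    rcases lt_or_ge m n with hlt | hle
    · exact hlater n hn hlt i hi
    · intro e
      obtain ⟨o', ⟨ho'm, ho'p⟩, _⟩ := h2 n hn i hi
      have hod : o ∈ outputsOf (L.drop n) := by
        refine List.mem_flatMap.2 ⟨L[m], ?_, ho⟩
        have h' : (L.drop n)[m - n]'(by simp; omega) = L[m] := by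
          rw [List.getElem_drop]
          congr 1
          omega
        exact h' ▸ List.getElem_mem _
      have hpair := h1
      rw [← List.take_append_drop n L, outputsOf_append, List.pairwise_append] at hpair
      exact hpair.2.2 o' ho'm o hod (by rw [ho'p, e])
  · rintro ⟨ho, hno⟩
    obtain ⟨t, ht, hot⟩ := List.mem_flatMap.1 ho
    obtain ⟨m, hm, rfl⟩ := List.mem_iff_getElem.1 ht
    exact ⟨m, hm, hot, fun n hn _ i hi => hno L[n] (List.getElem_mem hn) i hi⟩

lemma take_app_of_le {α : Type*} {A C : List α} {n : ℕ} (h : n ≤ A.length) :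
    (A ++ C).take n = A.take n := by
  rw [List.take_append, Nat.sub_eq_zero_of_le h]
  simp

lemma take_app_add {α : Type*} (A C : List α) (m : ℕ) :
    (A ++ C).take (A.length + m) = A ++ C.take m := by
  rw [List.take_append]
  simp

lemma getElem_app_add {α : Type*} {A C : List α} {m : ℕ} (hm : m < C.length)
    {hh : A.length + m < (A ++ C).length} :
    (A ++ C)[A.length + m] = C[m] := by
  rw [List.getElem_append_right (Nat.le_add_right _ _)]
  simp

lemma outputs_perm (B txs : List (Tx V)) (tx : Tx V) :
    (outputsOf (B ++ tx :: txs)).Perm (outputsOf (B ++ (txs ++ [tx]))) := by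
  rw [outputsOf_append, outputsOf_append, outputsOf_cons, outputsOf_append]
  have e : outputsOf [tx] = tx.outputs := by simp [outputsOf]
  rw [e]
  exact List.Perm.append_left _ List.perm_append_comm

lemma valid_forward (val : V → Redeemer → Datum → Value → Context V → Prop)
    (B txs : List (Tx V)) (tx : Tx V) (h : ∀ tx' ∈ txs, Apart tx tx')
    (hv : Valid val (B ++ tx :: txs)) : Valid val (B ++ (txs ++ [tx])) := by
  obtain ⟨h1, h2, h3⟩ := hv
  have main : ∀ n (hn : n < (B ++ (txs ++ [tx])).length),
      ∀ i ∈ (B ++ (txs ++ [tx]))[n].inputs,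
      (∃! o : Output V, o ∈ outputsOf ((B ++ (txs ++ [tx])).take n) ∧ o.pos = i.pos) ∧
      (∀ o ∈ outputsOf ((B ++ (txs ++ [tx])).take n), o.pos = i.pos →
        val o.validator i.redeemer o.datum o.value ⟨(B ++ (txs ++ [tx]))[n], i⟩) := by
    intro n hn i hi
    have hlen : n < B.length + (txs.length + 1) := by simpa using hn
    rcases Nat.lt_or_ge n B.length with hc | hc
    · -- in B
      have e2 : ∀ hh, (B ++ (txs ++ [tx]))[n]'hh = B[n]'hc :=
        fun _ => List.getElem_append_left hc
      have e1 : ∀ hh, (B ++ tx :: txs)[n]'hh = B[n]'hc :=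
        fun _ => List.getElem_append_left hc
      have et : (B ++ (txs ++ [tx])).take n = (B ++ tx :: txs).take n := by
        rw [take_app_of_le (le_of_lt hc), take_app_of_le (le_of_lt hc)]
      have hn1 : n < (B ++ tx :: txs).length := by simp; omega
      rw [e2] at hi
      have hi1 : i ∈ (B ++ tx :: txs)[n].inputs := by rw [e1]; exact hi
      constructor
      · rw [et]; exact h2 n hn1 i hi1
      · rw [et, e2]
        have hVal := h3 n hn1 i hi1
        rw [e1] at hVal
        exact hVal
    · rcases Nat.lt_or_ge n (B.length + txs.length) with hc2 | hc2
      · -- middle: one of txs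
        obtain ⟨j, hj, rfl⟩ : ∃ j, j < txs.length ∧ n = B.length + j :=
          ⟨n - B.length, by omega, by omega⟩
        have hj' : txs[j] ∈ txs := List.getElem_mem hj
        have e2 : ∀ hh, (B ++ (txs ++ [tx]))[B.length + j]'hh = txs[j] := by
          intro hh
          rw [getElem_app_add (by simp; omega)]
          exact List.getElem_append_left hj
        have e1 : ∀ hh, (B ++ tx :: txs)[B.length + (j+1)]'hh = txs[j] := by
          intro hh
          rw [getElem_app_add (by simp; omega)]
          simp
        have et2 : (B ++ (txs ++ [tx])).take (B.length + j) = B ++ txs.take j := by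
          rw [take_app_add, take_app_of_le (le_of_lt hj)]
        have et1 : (B ++ tx :: txs).take (B.length + (j+1)) = B ++ tx :: txs.take j := by
          rw [take_app_add, List.take_succ_cons]
        have hn1 : B.length + (j+1) < (B ++ tx :: txs).length := by simp; omega
        rw [e2] at hi
        have hi1 : i ∈ ((B ++ tx :: txs)[B.length + (j+1)]'hn1).inputs := by
          rw [e1]; exact hi
        have hap : ∀ o' ∈ tx.outputs, o'.pos ≠ i.pos := by
          intro o' ho' e
          exact h txs[j] hj' i.pos (Or.inr ⟨o', ho', e⟩) (Or.inl ⟨i, hi, rfl⟩)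
        have hEU := h2 _ hn1 i hi1
        rw [et1, outputsOf_append, outputsOf_cons] at hEU
        constructor
        · rw [et2, outputsOf_append]
          exact (existsUnique_congr (fun o => mem_middle_iff hap)).1 hEU
        · intro o ho hpos
          rw [e2]
          have hVal := h3 _ hn1 i hi1
          rw [et1, e1] at hVal
          apply hVal
          · rw [et2, outputsOf_append] at ho
            rw [outputsOf_append, outputsOf_cons]
            rcases List.mem_append.1 ho with h' | h'
            · exact List.mem_append.2 (Or.inl h')
            · exact List.mem_append.2 (Or.inr (List.mem_append.2 (Or.inr h')))
          · exact hpos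
      · -- last: tx
        obtain rfl : n = B.length + txs.length := by omega
        have e2 : ∀ hh, (B ++ (txs ++ [tx]))[B.length + txs.length]'hh = tx := by
          intro hh
          rw [getElem_app_add (by simp)]
          rw [List.getElem_append_right le_rfl]
          simp
        have e1 : ∀ hh, (B ++ tx :: txs)[B.length]'hh = tx := by
          intro hh
          rw [List.getElem_append_right le_rfl]
          simp
        have et2 : (B ++ (txs ++ [tx])).take (B.length + txs.length) = B ++ txs := by
          rw [take_app_add, take_app_of_le le_rfl, List.take_length]
        have et1 : (B ++ tx :: txs).take B.length = B := by
          rw [take_app_of_le le_rfl, List.take_length]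
        have hn1 : B.length < (B ++ tx :: txs).length := by simp
        rw [e2] at hi
        have hi1 : i ∈ ((B ++ tx :: txs)[B.length]'hn1).inputs := by
          rw [e1]; exact hi
        have hap : ∀ o' ∈ outputsOf txs, o'.pos ≠ i.pos := by
          intro o' ho' e
          obtain ⟨tx', htx', ho2⟩ := List.mem_flatMap.1 ho'
          exact h tx' htx' i.pos (Or.inl ⟨i, hi, rfl⟩) (Or.inr ⟨o', ho2, e⟩)
        have hEU := h2 _ hn1 i hi1
        rw [et1] at hEU
        constructor
        · rw [et2, outputsOf_append]
          exact (existsUnique_congr (fun o => mem_pair_iff hap)).2 hEU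
        · intro o ho hpos
          rw [e2]
          have hVal := h3 _ hn1 i hi1
          rw [et1, e1] at hVal
          apply hVal
          · rw [et2, outputsOf_append] at ho
            exact ((mem_pair_iff hap).1 ⟨ho, hpos⟩).1
          · exact hpos
  exact ⟨(List.Perm.pairwise_iff (fun hxy e => hxy e.symm) (outputs_perm B txs tx)).1 h1,
    fun n hn i hi => (main n hn i hi).1, fun n hn i hi => (main n hn i hi).2⟩

lemma valid_backward (val : V → Redeemer → Datum → Value → Context V → Prop)
    (B txs : List (Tx V)) (tx : Tx V) (h : ∀ tx' ∈ txs, Apart tx tx')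
    (hv : Valid val (B ++ (txs ++ [tx]))) : Valid val (B ++ tx :: txs) := by
  obtain ⟨h1, h2, h3⟩ := hv
  have main : ∀ n (hn : n < (B ++ tx :: txs).length),
      ∀ i ∈ (B ++ tx :: txs)[n].inputs,
      (∃! o : Output V, o ∈ outputsOf ((B ++ tx :: txs).take n) ∧ o.pos = i.pos) ∧
      (∀ o ∈ outputsOf ((B ++ tx :: txs).take n), o.pos = i.pos →
        val o.validator i.redeemer o.datum o.value ⟨(B ++ tx :: txs)[n], i⟩) := by
    intro n hn i hi
    have hlen : n < B.length + (txs.length + 1) := by simpa using hn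
    rcases Nat.lt_or_ge n B.length with hc | hc
    · have e1 : ∀ hh, (B ++ tx :: txs)[n]'hh = B[n]'hc :=
        fun _ => List.getElem_append_left hc
      have e2 : ∀ hh, (B ++ (txs ++ [tx]))[n]'hh = B[n]'hc :=
        fun _ => List.getElem_append_left hc
      have et : (B ++ tx :: txs).take n = (B ++ (txs ++ [tx])).take n := by
        rw [take_app_of_le (le_of_lt hc), take_app_of_le (le_of_lt hc)]
      have hn2 : n < (B ++ (txs ++ [tx])).length := by simp; omega
      rw [e1] at hi
      have hi2 : i ∈ (B ++ (txs ++ [tx]))[n].inputs := by rw [e2]; exact hi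
      constructor
      · rw [et]; exact h2 n hn2 i hi2
      · rw [et, e1]
        have hVal := h3 n hn2 i hi2
        rw [e2] at hVal
        exact hVal
    · rcases Nat.eq_or_lt_of_le hc with hc1 | hc1
      · -- n = B.length : tx
        obtain rfl : n = B.length := hc1.symm
        have e1 : ∀ hh, (B ++ tx :: txs)[B.length]'hh = tx := by
          intro hh
          rw [List.getElem_append_right le_rfl]
          simp
        have e2 : ∀ hh, (B ++ (txs ++ [tx]))[B.length + txs.length]'hh = tx := by
          intro hh
          rw [getElem_app_add (by simp)]
          rw [List.getElem_append_right le_rfl]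
          simp
        have et1 : (B ++ tx :: txs).take B.length = B := by
          rw [take_app_of_le le_rfl, List.take_length]
        have et2 : (B ++ (txs ++ [tx])).take (B.length + txs.length) = B ++ txs := by
          rw [take_app_add, take_app_of_le le_rfl, List.take_length]
        have hn2 : B.length + txs.length < (B ++ (txs ++ [tx])).length := by simp
        rw [e1] at hi
        have hi2 : i ∈ ((B ++ (txs ++ [tx]))[B.length + txs.length]'hn2).inputs := by
          rw [e2]; exact hi
        have hap : ∀ o' ∈ outputsOf txs, o'.pos ≠ i.pos := by
          intro o' ho' e
          obtain ⟨tx', htx', ho2⟩ := List.mem_flatMap.1 ho'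
          exact h tx' htx' i.pos (Or.inl ⟨i, hi, rfl⟩) (Or.inr ⟨o', ho2, e⟩)
        have hEU := h2 _ hn2 i hi2
        rw [et2, outputsOf_append] at hEU
        constructor
        · rw [et1]
          exact (existsUnique_congr (fun o => mem_pair_iff hap)).1 hEU
        · intro o ho hpos
          rw [e1]
          have hVal := h3 _ hn2 i hi2
          rw [et2, e2] at hVal
          apply hVal
          · rw [et1] at ho
            rw [outputsOf_append]
            exact List.mem_append.2 (Or.inl ho)
          · exact hpos
      · -- middle : txs
        obtain ⟨j, hj, rfl⟩ : ∃ j, j < txs.length ∧ n = B.length + (j+1) :=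
          ⟨n - B.length - 1, by omega, by omega⟩
        have hj' : txs[j] ∈ txs := List.getElem_mem hj
        have e1 : ∀ hh, (B ++ tx :: txs)[B.length + (j+1)]'hh = txs[j] := by
          intro hh
          rw [getElem_app_add (by simp; omega)]
          simp
        have e2 : ∀ hh, (B ++ (txs ++ [tx]))[B.length + j]'hh = txs[j] := by
          intro hh
          rw [getElem_app_add (by simp; omega)]
          exact List.getElem_append_left hj
        have et1 : (B ++ tx :: txs).take (B.length + (j+1)) = B ++ tx :: txs.take j := by
          rw [take_app_add, List.take_succ_cons]
        have et2 : (B ++ (txs ++ [tx])).take (B.length + j) = B ++ txs.take j := by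
          rw [take_app_add, take_app_of_le (le_of_lt hj)]
        have hn2 : B.length + j < (B ++ (txs ++ [tx])).length := by simp; omega
        rw [e1] at hi
        have hi2 : i ∈ ((B ++ (txs ++ [tx]))[B.length + j]'hn2).inputs := by
          rw [e2]; exact hi
        have hap : ∀ o' ∈ tx.outputs, o'.pos ≠ i.pos := by
          intro o' ho' e
          exact h txs[j] hj' i.pos (Or.inr ⟨o', ho', e⟩) (Or.inl ⟨i, hi, rfl⟩)
        have hEU := h2 _ hn2 i hi2
        rw [et2, outputsOf_append] at hEU
        constructor
        · rw [et1, outputsOf_append, outputsOf_cons]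
          exact (existsUnique_congr (fun o => mem_middle_iff hap)).2 hEU
        · intro o ho hpos
          rw [e1]
          have hVal := h3 _ hn2 i hi2
          rw [et2, e2] at hVal
          apply hVal
          · rw [et1, outputsOf_append, outputsOf_cons] at ho
            have := (mem_middle_iff hap).1 ⟨ho, hpos⟩
            rw [outputsOf_append]
            exact this.1
          · exact hpos
  exact ⟨(List.Perm.pairwise_iff (fun hxy e => hxy e.symm) (outputs_perm B txs tx)).2 h1,
    fun n hn i hi => (main n hn i hi).1, fun n hn i hi => (main n hn i hi).2⟩
-- AUX END

/-- If `tx` is apart from every transaction in `txs`, then `B;tx;txs` is a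
valid blockchain iff `B;txs;tx` is, and in that case they are observationally
equivalent. -/
theorem valid_and_utxo_commute_of_apart
    (val : V → Redeemer → Datum → Value → Context V → Prop)
    (B txs : List (Tx V)) (tx : Tx V)
    (h : ∀ tx' ∈ txs, Apart tx tx') :
    (Valid val (B ++ [tx] ++ txs) ↔ Valid val (B ++ txs ++ [tx])) ∧
    (Valid val (B ++ [tx] ++ txs) →
      UTxO (B ++ [tx] ++ txs) = UTxO (B ++ txs ++ [tx])) := by
  have eA : B ++ [tx] ++ txs = B ++ tx :: txs := by simp
  have eB : B ++ txs ++ [tx] = B ++ (txs ++ [tx]) := by simp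
  rw [eA, eB]
  constructor
  · exact ⟨valid_forward val B txs tx h, valid_backward val B txs tx h⟩
  · intro hv1
    have hv2 := valid_forward val B txs tx h hv1
    rw [utxo_char val _ hv1, utxo_char val _ hv2]
    have hpermL : (B ++ tx :: txs).Perm (B ++ (txs ++ [tx])) :=
      List.Perm.append_left B (List.perm_append_singleton tx txs).symm
    have hperm := outputs_perm B txs tx
    ext o
    simp only [Set.mem_setOf_eq]
    constructor <;> rintro ⟨ho, hno⟩
    · exact ⟨hperm.mem_iff.1 ho, fun t ht => hno t (hpermL.mem_iff.2 ht)⟩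
    · exact ⟨hperm.mem_iff.2 ho, fun t ht => hno t (hpermL.mem_iff.1 ht)⟩
end

section
/- Alpha-equivalent valid blockchains are observationally equivalent: if B' is obtained from a valid blockchain B by a permutation of positions fixing the positions of all unspent outputs of B, then B and B' have the same set of unspent outputs. -/
variable {V : Type}

/-- The action of a position-renaming on a transaction. -/
def mapTx (f : Position → Position) (tx : Tx V) : Tx V :=
  ⟨tx.inputs.map (fun i => ⟨f i.pos, i.redeemer⟩),
   tx.outputs.map (fun o => ⟨f o.pos, o.validator, o.datum, o.value⟩)⟩

/-- Alpha-equivalent valid blockchains are observationally equivalent: renaming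
positions by a permutation fixing all unspent-output positions of a valid
blockchain `B` preserves its UTxO set. -/
theorem utxo_map_perm (val : V → Redeemer → Datum → Value → Context V → Prop)
    (B : List (Tx V)) (h : Valid val B) (π : Equiv.Perm Position)
    (hfix : ∀ o ∈ UTxO B, π o.pos = o.pos) :
    UTxO (B.map (mapTx ⇑π)) = UTxO B := by
  ext o
  simp only [UTxO, Set.mem_setOf_eq, List.length_map]
  constructor
  · rintro ⟨m, hm, ho, hun⟩
    rw [List.getElem_map] at ho
    simp only [mapTx, List.mem_map] at ho
    obtain ⟨o₀, ho₀, rfl⟩ := ho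
    have hun₀ : ∀ n, ∀ hn : n < B.length, m < n → ∀ i ∈ B[n].inputs, i.pos ≠ o₀.pos := by
      intro n hn hmn i hi hip
      have hmem : (⟨π i.pos, i.redeemer⟩ : Input) ∈ ((B.map (mapTx ⇑π))[n]'(by simpa using hn)).inputs := by
        rw [List.getElem_map]
        simp only [mapTx, List.mem_map]
        exact ⟨i, hi, rfl⟩
      exact hun n hn hmn _ hmem (by simp [hip])
    have ho₀U : o₀ ∈ UTxO B := ⟨m, hm, ho₀, hun₀⟩
    have hp : π o₀.pos = o₀.pos := hfix o₀ ho₀U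
    have he : (⟨π o₀.pos, o₀.validator, o₀.datum, o₀.value⟩ : Output V) = o₀ := by
      rw [hp]
    rw [he]
    exact ho₀U
  · rintro ⟨m, hm, ho, hun⟩
    have hoU : o ∈ UTxO B := ⟨m, hm, ho, hun⟩
    have hp : π o.pos = o.pos := hfix o hoU
    refine ⟨m, hm, ?_, ?_⟩
    · rw [List.getElem_map]
      simp only [mapTx, List.mem_map]
      exact ⟨o, ho, by rw [hp]⟩
    · intro n hn hmn i hi
      rw [List.getElem_map] at hi
      simp only [mapTx, List.mem_map] at hi
      obtain ⟨i₀, hi₀, rfl⟩ := hi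
      have := hun n hn hmn i₀ hi₀
      exact fun hc => this (π.injective ((show π i₀.pos = o.pos from hc).trans hp.symm))
end
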